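/- arXiv:2509.09662 — 2 statements merged into one kernel-verified Lean document; each statement's English description precedes it below -/
import Mathlib

section
/- The group R3 = (C3 ≀ S8)^° ×_sign (C2 ≀ S12)^° has order 43252003274489856000 = 2^27 · 3^14 · 5^3 · 7^2 · 11. -/
open Equiv

/-- The automorphism of `(Z/n)^m` (written multiplicatively) permuting coordinates by `σ`. -/
def permAut (n m : ℕ) (σ : Equiv.Perm (Fin m)) :
    MulAut (Fin m → Multiplicative (ZMod n)) :=
  { Equiv.piCongrLeft' (fun _ => Multiplicative (ZMod n)) σ with
    map_mul' := fun _ _ => rfl }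

/-- The action of `S_m` on `(Z/n)^m` permuting coordinates. -/
def permHom (n m : ℕ) : Equiv.Perm (Fin m) →* MulAut (Fin m → Multiplicative (ZMod n)) where
  toFun := permAut n m
  map_one' := by ext x i; rfl
  map_mul' := fun σ τ => by ext x i; rfl

/-- The wreath product `C_n ≀ S_m = (Z/n)^m ⋊ S_m`, where `S_m` permutes coordinates. -/
abbrev Wr (n m : ℕ) :=
  SemidirectProduct (Fin m → Multiplicative (ZMod n)) (Equiv.Perm (Fin m)) (permHom n m)

/-- The homomorphism `C_n ≀ S_m → Z/n`, `(x, σ) ↦ ∑ i, x i`. -/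
def sumHom (n m : ℕ) : Wr n m →* Multiplicative (ZMod n) :=
  SemidirectProduct.lift
    (MonoidHom.mk' (fun x => ∏ i, x i) (by intro a b; simp [Finset.prod_mul_distrib]))
    1
    (by
      intro σ
      refine MonoidHom.ext fun x => ?_
      simp
      exact Equiv.prod_comp σ.symm x)

/-- `(C_n ≀ S_m)^°`, the kernel of `(x, σ) ↦ ∑ i, x i`. -/
abbrev WrO (n m : ℕ) : Subgroup (Wr n m) := (sumHom n m).ker

/-- The sign homomorphism `(C_n ≀ S_m)^° → {±1}`, `(x, σ) ↦ sign σ`. -/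
def signW (n m : ℕ) : ↥(WrO n m) →* ℤˣ :=
  (Equiv.Perm.sign.comp SemidirectProduct.rightHom).comp (WrO n m).subtype

/-- The fiber product `G ×_{φ,ψ} H = {(a, b) : φ a = ψ b}` of two group homomorphisms,
as a subgroup of the direct product `G × H`. -/
def fiberProduct {G H K : Type*} [Group G] [Group H] [Group K]
    (φ : G →* K) (ψ : H →* K) : Subgroup (G × H) where
  carrier := {p | φ p.1 = ψ p.2}
  one_mem' := by simp
  mul_mem' := by
    intro a b ha hb
    simp only [Set.mem_setOf_eq, Prod.fst_mul, Prod.snd_mul, map_mul] at *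
    rw [ha, hb]
  inv_mem' := by
    intro a ha
    simp only [Set.mem_setOf_eq, Prod.fst_inv, Prod.snd_inv, map_inv] at *
    rw [ha]

/-- The Rubik's Cube group `R3 = (C3 ≀ S8)^° ×_sign (C2 ≀ S12)^°`. -/
abbrev RubikR3 : Subgroup (↥(WrO 3 8) × ↥(WrO 2 12)) :=
  fiberProduct (signW 3 8) (signW 2 12)

lemma card_ker_of_surj {G K : Type*} [Group G] [Group K] (f : G →* K)
    (hf : Function.Surjective f) : Nat.card f.ker * Nat.card K = Nat.card G := by
  have := Subgroup.card_mul_index f.ker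
  rwa [Subgroup.index_ker, (MonoidHom.range_eq_top).2 hf, Subgroup.card_top] at this

lemma card_WrO (n m : ℕ) [NeZero n] (hm : 0 < m) :
    Nat.card ↥(WrO n m) * n = n ^ m * m.factorial := by
  have hsurj : Function.Surjective (sumHom n m) := by
    intro z
    refine ⟨⟨fun i => if i = ⟨0, hm⟩ then z else 1, 1⟩, ?_⟩
    simp [sumHom]
  have h1 := card_ker_of_surj _ hsurj
  have e : Wr n m ≃ (Fin m → Multiplicative (ZMod n)) × Perm (Fin m) :=
    ⟨fun g => (g.left, g.right), fun p => ⟨p.1, p.2⟩, fun g => rfl, fun p => rfl⟩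
  rw [Nat.card_congr e] at h1
  simp only [Nat.card_eq_fintype_card, Fintype.card_prod, Fintype.card_fun, ZMod.card,
    Fintype.card_perm, Fintype.card_fin] at h1 ⊢
  rw [show Fintype.card (Multiplicative (ZMod n)) = n by simp [ZMod.card]] at h1
  exact h1

lemma card_WrO38 : Nat.card ↥(WrO 3 8) = 88179840 := by
  have := card_WrO 3 8 (by norm_num)
  rw [show Nat.factorial 8 = 40320 from rfl] at this
  omega

lemma card_WrO212 : Nat.card ↥(WrO 2 12) = 980995276800 := by
  have := card_WrO 2 12 (by norm_num)
  rw [show Nat.factorial 12 = 479001600 from rfl] at this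
  omega

/-- The Rubik's Cube group `R3 = (C3 ≀ S8)^° ×_sign (C2 ≀ S12)^°` has order
`43252003274489856000 = 2^27 · 3^14 · 5^3 · 7^2 · 11`. -/
theorem rubik_R3_card :
    Nat.card ↥RubikR3 = 43252003274489856000 ∧
    (43252003274489856000 : ℕ) = 2 ^ 27 * 3 ^ 14 * 5 ^ 3 * 7 ^ 2 * 11 := by
  constructor
  · -- χ : product → ℤˣ
    set χ : (↥(WrO 3 8) × ↥(WrO 2 12)) →* ℤˣ :=
      ((signW 3 8).comp (MonoidHom.fst _ _)) * ((signW 2 12).comp (MonoidHom.snd _ _))⁻¹ with hχ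
    have hker : χ.ker = RubikR3 := by
      ext p
      simp only [MonoidHom.mem_ker, hχ, MonoidHom.mul_apply, MonoidHom.inv_apply,
        MonoidHom.comp_apply, MonoidHom.coe_fst, MonoidHom.coe_snd]
      constructor
      · intro h
        have := mul_inv_eq_one.1 h
        exact this
      · intro h
        simp [fiberProduct, Subgroup.mem_mk] at h
        rw [h]
        simp
    have hsurj : Function.Surjective χ := by
      intro z
      rcases Int.units_eq_one_or z with rfl | rfl
      · exact ⟨1, by simp⟩
      · -- element of WrO 3 8 with sign -1
        have hmem : (⟨1, Equiv.swap 0 1⟩ : Wr 3 8) ∈ WrO 3 8 := by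
          simp [sumHom]
        refine ⟨(⟨⟨1, Equiv.swap 0 1⟩, hmem⟩, 1), ?_⟩
        simp [hχ, signW, SemidirectProduct.rightHom, Equiv.Perm.sign_swap (show (0:Fin 8) ≠ 1 by decide)]
    have h1 := card_ker_of_surj χ hsurj
    rw [hker] at h1
    have h2 : Nat.card (↥(WrO 3 8) × ↥(WrO 2 12)) = 88179840 * 980995276800 := by
      rw [Nat.card_prod, card_WrO38, card_WrO212]
    rw [h2] at h1
    have h3 : Nat.card ℤˣ = 2 := by simp [Nat.card_eq_fintype_card]
    rw [h3] at h1
    omega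
  · norm_num
end

section
/- The center of the Rubik's Cube group R3 has order 2 and is generated by the element (((0,…,0), id), ((1,…,1), id)), i.e. the superflip, whose first component is the identity of (C3 ≀ S8)^° and whose second component is the element of (C2 ≀ S12)^° with all twelve coordinates equal to 1 ∈ Z/2 and trivial permutation. -/
open Equiv

/-- The edge part of the superflip: all twelve coordinates equal `1 ∈ Z/2`, trivial
permutation. -/
def superflipEdges : ↥(WrO 2 12) :=
  ⟨⟨fun _ => Multiplicative.ofAdd (1 : ZMod 2), 1⟩, by
    rw [MonoidHom.mem_ker]
    show (∏ _i : Fin 12, Multiplicative.ofAdd (1 : ZMod 2)) * 1 = 1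
    decide⟩

/-- The superflip `(((0,…,0), id), ((1,…,1), id))`: the identity in `(C3 ≀ S8)^°` together
with the element of `(C2 ≀ S12)^°` all of whose coordinates are `1 ∈ Z/2`, with trivial
permutation. -/
def superflip : ↥RubikR3 :=
  ⟨(1, superflipEdges), by
    show signW 3 8 1 = signW 2 12 superflipEdges
    simp [signW, superflipEdges, SemidirectProduct.rightHom]⟩


/-! ### Auxiliary lemmas -/

theorem perm_eq_one_of_comm {m : ℕ} (hm : 2 < m) (σ : Perm (Fin m))
    (h : ∀ τ : Perm (Fin m), τ * σ = σ * τ) : σ = 1 := by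
  refine Equiv.ext fun i => ?_
  show σ i = i
  by_contra hi
  have hcard : ({i, σ i} : Finset (Fin m)) ≠ Finset.univ := by
    intro he
    have h2 : ({i, σ i} : Finset (Fin m)).card ≤ 2 := by
      apply (Finset.card_insert_le _ _).trans; simp
    rw [he, Finset.card_univ, Fintype.card_fin] at h2
    omega
  obtain ⟨k, hk⟩ : ∃ k, k ∉ ({i, σ i} : Finset (Fin m)) := by
    by_contra hc
    push_neg at hc
    exact hcard (Finset.eq_univ_iff_forall.mpr hc)
  simp only [Finset.mem_insert, Finset.mem_singleton, not_or] at hk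
  have h2 := congrArg (fun p => p i) (h (Equiv.swap (σ i) k))
  simp only [Perm.mul_apply] at h2
  rw [Equiv.swap_apply_left,
    Equiv.swap_apply_of_ne_of_ne (fun he : i = σ i => hi he.symm) (fun he => hk.1 he.symm)] at h2
  exact hk.2 h2

/-- The element `(1, τ)` of `(C_n ≀ S_m)^°`. -/
def permW (n m : ℕ) (τ : Perm (Fin m)) : ↥(WrO n m) :=
  ⟨⟨1, τ⟩, by
    rw [MonoidHom.mem_ker]
    show (∏ _i : Fin m, (1 : Multiplicative (ZMod n))) * 1 = 1
    simp⟩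

theorem signW_permW (n m : ℕ) (τ : Perm (Fin m)) :
    signW n m (permW n m τ) = Equiv.Perm.sign τ := rfl

/-- A permutation of prescribed sign. -/
def permOfSign (m : ℕ) (hm : 2 ≤ m) (ε : ℤˣ) : Perm (Fin m) :=
  if ε = 1 then 1 else Equiv.swap ⟨0, by omega⟩ ⟨1, by omega⟩

theorem sign_permOfSign (m : ℕ) (hm : 2 ≤ m) (ε : ℤˣ) :
    Equiv.Perm.sign (permOfSign m hm ε) = ε := by
  rcases Int.units_eq_one_or ε with h | h
  · subst h; simp [permOfSign]
  · subst h
    rw [permOfSign, if_neg (by decide)]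
    rw [Equiv.Perm.sign_swap]
    intro h
    have := congrArg Fin.val h
    simp at this

/-- If an element of `(C_n ≀ S_m)^°` commutes with all `(1, τ)`, its permutation part is
trivial and its vector part is constant. -/
theorem comm_struct {n m : ℕ} (hm : 2 < m) (z : ↥(WrO n m))
    (h : ∀ τ : Perm (Fin m), permW n m τ * z = z * permW n m τ) :
    (z : Wr n m).right = 1 ∧ ∀ i j : Fin m, (z : Wr n m).left i = (z : Wr n m).left j := by
  have hcomm : ∀ τ : Perm (Fin m), (⟨1, τ⟩ : Wr n m) * (z : Wr n m) = (z : Wr n m) * ⟨1, τ⟩ :=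
    fun τ => congrArg Subtype.val (h τ)
  constructor
  · apply perm_eq_one_of_comm hm
    intro τ
    have := congrArg SemidirectProduct.right (hcomm τ)
    simpa using this
  · intro i j
    have := congrArg (fun w : Wr n m => w.left j) (hcomm (Equiv.swap i j))
    simp only [SemidirectProduct.mul_left] at this
    have h2 : (permHom n m (Equiv.swap i j) (z : Wr n m).left) j = (z : Wr n m).left i := by
      show (z : Wr n m).left ((Equiv.swap i j).symm j) = _
      simp
    have h3 : (permHom n m (z : Wr n m).right (1 : Fin m → Multiplicative (ZMod n)))
        = 1 := map_one _
    rw [h3] at this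
    simp only [one_mul, Pi.mul_apply, Pi.one_apply, mul_one, h2] at this
    exact this

/-- Constant vectors give central elements of the wreath product. -/
theorem const_mul_comm {n m : ℕ} (c : Multiplicative (ZMod n)) (w : Wr n m) :
    w * ⟨fun _ => c, 1⟩ = (⟨fun _ => c, 1⟩ : Wr n m) * w := by
  refine SemidirectProduct.ext ?_ ?_
  · show w.left * permHom n m w.right (fun _ => c) = (fun _ => c) * permHom n m 1 w.left
    funext i
    show w.left i * c = c * w.left i
    exact mul_comm _ _
  · show w.right * 1 = 1 * w.right
    rw [mul_one, one_mul]

theorem zmod3_pow8 : ∀ c : Multiplicative (ZMod 3), c ^ 8 = 1 → c = 1 := by decide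

theorem zmod2_cases : ∀ c : Multiplicative (ZMod 2),
    c = 1 ∨ c = Multiplicative.ofAdd 1 := by decide

theorem superflip_mem_center : superflip ∈ Subgroup.center ↥RubikR3 := by
  rw [Subgroup.mem_center_iff]
  intro g
  refine Subtype.ext (Prod.ext ?_ ?_)
  · show g.val.1 * 1 = 1 * g.val.1
    rw [mul_one, one_mul]
  · show g.val.2 * superflipEdges = superflipEdges * g.val.2
    refine Subtype.ext ?_
    exact const_mul_comm (Multiplicative.ofAdd (1 : ZMod 2)) (g.val.2 : Wr 2 12)

theorem superflip_sq : superflip * superflip = 1 := by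
  refine Subtype.ext (Prod.ext ?_ ?_)
  · show (1 : ↥(WrO 3 8)) * 1 = 1
    rw [mul_one]
  · show superflipEdges * superflipEdges = 1
    refine Subtype.ext (SemidirectProduct.ext ?_ ?_)
    · funext i
      show Multiplicative.ofAdd (1 : ZMod 2) *
        (permHom 2 12 1 (fun _ => Multiplicative.ofAdd (1 : ZMod 2))) i = 1
      show Multiplicative.ofAdd (1 : ZMod 2) * Multiplicative.ofAdd (1 : ZMod 2) = 1
      decide
    · show (1 : Perm (Fin 12)) * 1 = 1
      rw [mul_one]

theorem superflip_ne_one : superflip ≠ 1 := by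
  intro h
  have := congrArg (fun w : ↥RubikR3 => w.val.2.val.left 0) h
  exact absurd this (by decide)

/-- The corner element paired with a matching-sign edge permutation. -/
def g8 (τ : Perm (Fin 8)) : ↥RubikR3 :=
  ⟨(permW 3 8 τ, permW 2 12 (permOfSign 12 (by norm_num) (Equiv.Perm.sign τ))), by
    show signW 3 8 (permW 3 8 τ) = signW 2 12 (permW 2 12 _)
    rw [signW_permW, signW_permW, sign_permOfSign]⟩

/-- The edge element paired with a matching-sign corner permutation. -/
def g12 (τ : Perm (Fin 12)) : ↥RubikR3 :=
  ⟨(permW 3 8 (permOfSign 8 (by norm_num) (Equiv.Perm.sign τ)), permW 2 12 τ), by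
    show signW 3 8 (permW 3 8 _) = signW 2 12 (permW 2 12 τ)
    rw [signW_permW, signW_permW, sign_permOfSign]⟩

theorem center_eq_zpowers :
    Subgroup.center ↥RubikR3 = Subgroup.zpowers superflip := by
  apply le_antisymm
  · intro z hz
    rw [Subgroup.mem_center_iff] at hz
    have h8 : ∀ τ : Perm (Fin 8), permW 3 8 τ * z.val.1 = z.val.1 * permW 3 8 τ := by
      intro τ
      exact congrArg (fun w : ↥RubikR3 => w.val.1) (hz (g8 τ))
    have h12 : ∀ τ : Perm (Fin 12), permW 2 12 τ * z.val.2 = z.val.2 * permW 2 12 τ := by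
      intro τ
      exact congrArg (fun w : ↥RubikR3 => w.val.2) (hz (g12 τ))
    obtain ⟨hr8, hc8⟩ := comm_struct (by norm_num) z.val.1 h8
    obtain ⟨hr12, hc12⟩ := comm_struct (by norm_num) z.val.2 h12
    -- corner part is trivial
    have hker8 : (∏ i, (z.val.1 : Wr 3 8).left i) * 1 = 1 := z.val.1.property
    have hp8 : (∏ i, (z.val.1 : Wr 3 8).left i) = ((z.val.1 : Wr 3 8).left 0) ^ 8 := by
      rw [Finset.prod_congr rfl (fun i _ => hc8 i 0)]
      simp
    rw [mul_one, hp8] at hker8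
    have hone8 := zmod3_pow8 _ hker8
    have hz1 : z.val.1 = 1 := by
      refine Subtype.ext (SemidirectProduct.ext ?_ hr8)
      funext i
      show (z.val.1 : Wr 3 8).left i = 1
      rw [hc8 i 0, hone8]
    -- edge part is trivial or the superflip
    rcases zmod2_cases ((z.val.2 : Wr 2 12).left 0) with hc | hc
    · have hz2 : z.val.2 = 1 := by
        refine Subtype.ext (SemidirectProduct.ext ?_ hr12)
        funext i
        show (z.val.2 : Wr 2 12).left i = 1
        rw [hc12 i 0, hc]
      have : z = 1 := by
        refine Subtype.ext (Prod.ext ?_ ?_)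
        · exact hz1
        · exact hz2
      rw [this]
      exact Subgroup.one_mem _
    · have hz2 : z.val.2 = superflipEdges := by
        refine Subtype.ext (SemidirectProduct.ext ?_ hr12)
        funext i
        show (z.val.2 : Wr 2 12).left i = Multiplicative.ofAdd (1 : ZMod 2)
        rw [hc12 i 0, hc]
      have : z = superflip := by
        refine Subtype.ext (Prod.ext ?_ ?_)
        · exact hz1
        · exact hz2
      rw [this]
      exact Subgroup.mem_zpowers _
  · rw [Subgroup.zpowers_le]
    exact superflip_mem_center

/-- The center of the Rubik's Cube group `R3` has order `2` and is generated by the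
superflip. -/
theorem rubik_R3_center :
    Nat.card (Subgroup.center ↥RubikR3) = 2 ∧
    Subgroup.center ↥RubikR3 = Subgroup.zpowers superflip := by
  refine ⟨?_, center_eq_zpowers⟩
  rw [center_eq_zpowers, Nat.card_zpowers]
  have : Fact (Nat.Prime 2) := ⟨by norm_num⟩
  exact orderOf_eq_prime (by rw [pow_two]; exact superflip_sq) superflip_ne_one
end
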